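/- Every nontrivial element of a free group is contained in a unique maximal infinite cyclic subgroup. -/

import Mathlib

section Aux

/-- `invRev` reverses append. -/
lemma freeGroupAux_invRev_append {S : Type*} (L₁ L₂ : List (S × Bool)) :
    FreeGroup.invRev (L₁ ++ L₂) = FreeGroup.invRev L₂ ++ FreeGroup.invRev L₁ := by
  simp [FreeGroup.invRev]

/-- A free group with at least two generators has trivial center. -/
lemma freeGroupAux_no_center {S : Type*} {z : FreeGroup S} (hz : z ≠ 1)
    (hc : ∀ u : FreeGroup S, u * z = z * u) {a b : S} (hab : a ≠ b) : False := by
  classical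
  set w : List (S × Bool) := z.toWord with hwdef
  have hw : w ≠ [] := fun h => hz (FreeGroup.toWord_eq_nil_iff.mp h)
  obtain ⟨hd, tl, hcons⟩ := List.exists_cons_of_ne_nil hw
  set lst : S × Bool := w.getLast hw with hlstdef
  -- choose a letter x which neither cancels at the front nor at the back
  obtain ⟨x, hx1, hx2⟩ : ∃ x : S × Bool, x.1 ≠ hd.1 ∧ x ≠ (lst.1, !lst.2) := by
    by_cases h01 : hd.1 = lst.1
    · have hc1 : (if a = hd.1 then b else a) ≠ hd.1 := by
        by_cases hah : a = hd.1
        · rw [if_pos hah]; exact fun h => hab (hah.trans h.symm)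
        · rw [if_neg hah]; exact hah
      refine ⟨(if a = hd.1 then b else a, true), hc1, ?_⟩
      intro hcontra
      have h2 : (if a = hd.1 then b else a) = lst.1 := congrArg Prod.fst hcontra
      rw [← h01] at h2
      exact hc1 h2
    · refine ⟨lst, fun h => h01 h.symm, fun h => ?_⟩
      have := congrArg Prod.snd h
      simp at this
  -- compute the two normal forms
  have hzw : z = FreeGroup.mk w := (FreeGroup.mk_toWord).symm
  have hreduced : FreeGroup.reduce w = w := FreeGroup.reduce_toWord z
  -- left multiplication
  have hA : (FreeGroup.mk [x] * z).toWord = x :: w := by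
    rw [hzw, FreeGroup.mul_mk]
    show FreeGroup.reduce ([x] ++ w) = x :: w
    rw [List.singleton_append, FreeGroup.reduce.cons, hreduced, hcons]
    have : ¬(x.1 = hd.1 ∧ x.2 = !hd.2) := fun h => hx1 h.1
    simp only [this, if_false]
  -- right multiplication, via inverses
  have hw_split : w = w.dropLast ++ [lst] := (List.dropLast_append_getLast hw).symm
  have hinvrev_red : FreeGroup.reduce (FreeGroup.invRev w) = FreeGroup.invRev w := by
    rw [FreeGroup.reduce_invRev, hreduced]
  have hinvrev_cons : FreeGroup.invRev w
      = (lst.1, !lst.2) :: FreeGroup.invRev w.dropLast := by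
    conv_lhs => rw [hw_split]
    rw [freeGroupAux_invRev_append]
    simp [FreeGroup.invRev]
  have hBinv : ((z * FreeGroup.mk [x])⁻¹).toWord = (x.1, !x.2) :: FreeGroup.invRev w := by
    rw [mul_inv_rev, hzw, FreeGroup.inv_mk, FreeGroup.inv_mk, FreeGroup.mul_mk]
    have hinvx : FreeGroup.invRev [x] = [(x.1, !x.2)] := by simp [FreeGroup.invRev]
    rw [hinvx]
    show FreeGroup.reduce ([(x.1, !x.2)] ++ FreeGroup.invRev w) = _
    rw [List.singleton_append, FreeGroup.reduce.cons, hinvrev_red, hinvrev_cons]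
    have hcond : ¬((x.1, !x.2).1 = (lst.1, !lst.2).1 ∧ (x.1, !x.2).2 = !(lst.1, !lst.2).2) := by
      rintro ⟨h1, h2⟩
      apply hx2
      have h2' : x.2 = !lst.2 := by
        have := congrArg Bool.not h2
        simpa using this
      exact Prod.ext h1 h2'
    simp only [hcond, if_false]
  have hB : (z * FreeGroup.mk [x]).toWord = w ++ [x] := by
    have h1 : FreeGroup.invRev ((z * FreeGroup.mk [x]).toWord)
        = (x.1, !x.2) :: FreeGroup.invRev w := by
      rw [← FreeGroup.toWord_inv, hBinv]
    have h2 := congrArg FreeGroup.invRev h1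
    rw [FreeGroup.invRev_invRev] at h2
    rw [h2]
    show FreeGroup.invRev ([(x.1, !x.2)] ++ FreeGroup.invRev w) = w ++ [x]
    rw [freeGroupAux_invRev_append, FreeGroup.invRev_invRev]
    simp [FreeGroup.invRev]
  -- derive the contradiction
  have heq : x :: w = w ++ [x] := by
    rw [← hA, ← hB, hc (FreeGroup.mk [x])]
  rw [hcons] at heq
  have : x = hd := by
    have := congrArg (fun l => l.head?) heq
    simpa using this
  exact hx1 (by rw [this])

/-- Any two elements of a free group over a subsingleton type commute. -/
lemma freeGroupAux_comm_subsingleton {S : Type*} [Subsingleton S]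
    (u v : FreeGroup S) : Commute u v := by
  induction u using FreeGroup.induction_on with
  | C1 => exact Commute.one_left v
  | of x =>
    induction v using FreeGroup.induction_on with
    | C1 => exact Commute.one_right _
    | of y => rw [Subsingleton.elim x y]
    | inv_of y h => exact h.inv_right
    | mul y z h1 h2 => exact h1.mul_right h2
  | inv_of x h => exact h.inv_left
  | mul x y h1 h2 => exact h1.mul_left h2

lemma freeGroupAux_eq_one_of_isEmpty {S : Type*} [IsEmpty S] (u : FreeGroup S) : u = 1 := by
  apply FreeGroup.toWord_eq_nil_iff.mp
  cases h : u.toWord with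
  | nil => rfl
  | cons hd tl => exact (IsEmpty.false hd.1).elim

/-- A free group over a subsingleton type is cyclic. -/
lemma freeGroupAux_zpowers_subsingleton {S : Type*} [Subsingleton S] :
    ∃ x : FreeGroup S, ∀ u : FreeGroup S, u ∈ Subgroup.zpowers x := by
  classical
  cases isEmpty_or_nonempty S with
  | inl h =>
    refine ⟨1, fun u => ?_⟩
    rw [freeGroupAux_eq_one_of_isEmpty u]
    exact one_mem _
  | inr h =>
    obtain ⟨s⟩ := h
    refine ⟨FreeGroup.of s, fun u => ?_⟩
    induction u using FreeGroup.induction_on with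
    | C1 => exact one_mem _
    | of x =>
      rw [Subsingleton.elim x s]
      exact Subgroup.mem_zpowers _
    | inv_of x h => exact inv_mem h
    | mul x y h1 h2 => exact mul_mem h1 h2

/-- A free group with a nontrivial central element is abelian. -/
lemma freeGroupAux_abelian_of_center {G : Type*} [Group G] [IsFreeGroup G] {z : G}
    (hz : z ≠ 1) (hzc : ∀ u : G, u * z = z * u) (u v : G) : u * v = v * u := by
  let e := IsFreeGroup.toFreeGroup G
  have hsub : Subsingleton (IsFreeGroup.Generators G) := by
    by_contra hns
    rw [not_subsingleton_iff_nontrivial] at hns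
    obtain ⟨a, b, hab⟩ := hns.exists_pair_ne
    refine freeGroupAux_no_center (z := e z) ?_ ?_ hab
    · exact fun h => hz (e.injective (by rw [h, _root_.map_one]))
    · intro u'
      have := congrArg e (hzc (e.symm u'))
      simpa [_root_.map_mul] using this
  have h := freeGroupAux_comm_subsingleton (e u) (e v)
  have h2 : e (u * v) = e (v * u) := by simpa [_root_.map_mul] using h.eq
  exact e.injective h2

/-- The noncommuting witness in a free group with two distinct generators. -/
lemma freeGroupAux_of_mul_ne {S : Type*} {a b : S} (hab : a ≠ b) :
    FreeGroup.of a * FreeGroup.of b ≠ FreeGroup.of b * FreeGroup.of a := by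
  classical
  intro h
  have h1 : (FreeGroup.of a * FreeGroup.of b).toWord = [(a, true), (b, true)] := by
    show (FreeGroup.mk [(a, true)] * FreeGroup.mk [(b, true)]).toWord = _
    rw [FreeGroup.mul_mk]
    show FreeGroup.reduce ([(a, true)] ++ [(b, true)]) = _
    rw [List.singleton_append, FreeGroup.reduce.cons, FreeGroup.reduce_singleton]
    have : ¬(((a, true) : S × Bool).1 = ((b, true) : S × Bool).1
        ∧ ((a, true) : S × Bool).2 = !((b, true) : S × Bool).2) := by
      rintro ⟨h1, -⟩; exact hab h1
    simp only [this, if_false]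
  have h2 : (FreeGroup.of b * FreeGroup.of a).toWord = [(b, true), (a, true)] := by
    show (FreeGroup.mk [(b, true)] * FreeGroup.mk [(a, true)]).toWord = _
    rw [FreeGroup.mul_mk]
    show FreeGroup.reduce ([(b, true)] ++ [(a, true)]) = _
    rw [List.singleton_append, FreeGroup.reduce.cons, FreeGroup.reduce_singleton]
    have : ¬(((b, true) : S × Bool).1 = ((a, true) : S × Bool).1
        ∧ ((b, true) : S × Bool).2 = !((a, true) : S × Bool).2) := by
      rintro ⟨h1, -⟩; exact hab h1.symm
    simp only [this, if_false]
  rw [h] at h1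
  rw [h1] at h2
  exact hab (by injection h2 with h3 _; injection h3)

/-- An abelian free group is cyclic. -/
lemma freeGroupAux_exists_zpowers_of_abelian {G : Type*} [Group G] [IsFreeGroup G]
    (hcomm : ∀ u v : G, u * v = v * u) :
    ∃ x : G, ∀ u : G, u ∈ Subgroup.zpowers x := by
  let e := IsFreeGroup.toFreeGroup G
  have hsub : Subsingleton (IsFreeGroup.Generators G) := by
    by_contra hns
    rw [not_subsingleton_iff_nontrivial] at hns
    obtain ⟨a, b, hab⟩ := hns.exists_pair_ne
    apply freeGroupAux_of_mul_ne hab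
    have := congrArg e (hcomm (e.symm (FreeGroup.of a)) (e.symm (FreeGroup.of b)))
    simpa [_root_.map_mul] using this
  obtain ⟨x0, hx0⟩ := freeGroupAux_zpowers_subsingleton (S := IsFreeGroup.Generators G)
  refine ⟨e.symm x0, fun u => ?_⟩
  obtain ⟨n, hn⟩ := Subgroup.mem_zpowers_iff.mp (hx0 (e u))
  refine Subgroup.mem_zpowers_iff.mpr ⟨n, ?_⟩
  rw [← map_zpow, hn]
  exact e.symm_apply_apply u

/-- A finite free group is trivial. -/
lemma freeGroupAux_subsingleton_of_finite {G : Type*} [Group G] [IsFreeGroup G]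
    (h : Finite G) : Subsingleton G := by
  let e := IsFreeGroup.toFreeGroup G
  have hfin : Finite (FreeGroup (IsFreeGroup.Generators G)) := Finite.of_equiv G e.toEquiv
  cases isEmpty_or_nonempty (IsFreeGroup.Generators G) with
  | inl hempty =>
    exact ⟨fun a b => e.injective (by
      rw [freeGroupAux_eq_one_of_isEmpty (e a), freeGroupAux_eq_one_of_isEmpty (e b)])⟩
  | inr hne =>
    have : Infinite (FreeGroup (IsFreeGroup.Generators G)) := inferInstance
    exact absurd hfin this.not_finite

/-- In a free group, `zpowers x` is infinite for `x ≠ 1`. -/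
lemma freeGroupAux_zpowers_infinite {α : Type*} {x : FreeGroup α} (hx : x ≠ 1) :
    ((Subgroup.zpowers x : Subgroup (FreeGroup α)) : Set (FreeGroup α)).Infinite := by
  by_contra h
  rw [Set.not_infinite] at h
  have hfin : Finite (Subgroup.zpowers x) := h.to_subtype
  have hsub : Subsingleton (Subgroup.zpowers x) := freeGroupAux_subsingleton_of_finite hfin
  have hx1 : (⟨x, Subgroup.mem_zpowers x⟩ : Subgroup.zpowers x) = 1 := Subsingleton.elim _ _
  exact hx (by simpa using congrArg Subtype.val hx1)

/-- Any abelian subgroup of a free group is cyclic (as a subgroup). -/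
lemma freeGroupAux_subgroup_cyclic {α : Type*} (H : Subgroup (FreeGroup α))
    (hcomm : ∀ u v : H, u * v = v * u) :
    ∃ x : FreeGroup α, H = Subgroup.zpowers x := by
  obtain ⟨x0, hx0⟩ := freeGroupAux_exists_zpowers_of_abelian (G := H) hcomm
  refine ⟨(x0 : FreeGroup α), le_antisymm ?_ ?_⟩
  · intro h hh
    obtain ⟨n, hn⟩ := Subgroup.mem_zpowers_iff.mp (hx0 ⟨h, hh⟩)
    refine Subgroup.mem_zpowers_iff.mpr ⟨n, ?_⟩
    have := congrArg (Subtype.val) hn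
    simpa using this
  · exact Subgroup.zpowers_le.mpr x0.2

/-- The centralizer of a nontrivial element of a free group is cyclic. -/
lemma freeGroupAux_centralizer_cyclic {α : Type*} {w : FreeGroup α} (hw : w ≠ 1) :
    ∃ t : FreeGroup α, Subgroup.centralizer {w} = Subgroup.zpowers t := by
  set H := Subgroup.centralizer ({w} : Set (FreeGroup α)) with hHdef
  have hwH : w ∈ H := Subgroup.mem_centralizer_singleton_iff.mpr rfl
  have hzc : ∀ u : H, u * (⟨w, hwH⟩ : H) = (⟨w, hwH⟩ : H) * u := by
    intro u
    ext
    exact Subgroup.mem_centralizer_singleton_iff.mp u.2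
  have hz : (⟨w, hwH⟩ : H) ≠ 1 := fun h => hw (by simpa using congrArg Subtype.val h)
  exact freeGroupAux_subgroup_cyclic H (freeGroupAux_abelian_of_center hz hzc)

end Aux

/-- Every nontrivial element of a free group is contained in a unique maximal
infinite cyclic subgroup. -/
theorem freeGroup_unique_maximal_infinite_cyclic {α : Type*} (g : FreeGroup α)
    (hg : g ≠ 1) :
    ∃! Z : Subgroup (FreeGroup α),
      g ∈ Z ∧ (∃ x : FreeGroup α, Z = Subgroup.zpowers x) ∧
      (Z : Set (FreeGroup α)).Infinite ∧
      ∀ W : Subgroup (FreeGroup α), (∃ y : FreeGroup α, W = Subgroup.zpowers y) →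
        Z ≤ W → Z = W := by
  classical
  set s : Set (Subgroup (FreeGroup α)) :=
    {Z | g ∈ Z ∧ ∃ x : FreeGroup α, Z = Subgroup.zpowers x} with hsdef
  -- Zorn's lemma
  have hchains : ∀ c ⊆ s, IsChain (· ≤ ·) c → ∀ y ∈ c,
      ∃ ub ∈ s, ∀ z ∈ c, z ≤ ub := by
    intro c hcs hchain y hyc
    have hdir : DirectedOn (· ≤ ·) c := hchain.directedOn
    set U : Subgroup (FreeGroup α) := sSup c with hUdef
    have hmemU : ∀ {v : FreeGroup α}, v ∈ U ↔ ∃ Z ∈ c, v ∈ Z := fun {v} =>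
      Subgroup.mem_sSup_of_directedOn ⟨y, hyc⟩ hdir
    have hUcomm : ∀ u v : U, u * v = v * u := by
      intro u v
      obtain ⟨Z1, hZ1, hu⟩ := hmemU.mp u.2
      obtain ⟨Z2, hZ2, hv⟩ := hmemU.mp v.2
      have htot : Z1 ≤ Z2 ∨ Z2 ≤ Z1 := hchain.total hZ1 hZ2
      have key : ∀ (Z : Subgroup (FreeGroup α)), Z ∈ c → (u : FreeGroup α) ∈ Z →
          (v : FreeGroup α) ∈ Z → (u : FreeGroup α) * v = (v : FreeGroup α) * u := by
        intro Z hZ huZ hvZ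
        obtain ⟨-, x, rfl⟩ := hcs hZ
        obtain ⟨m, hm⟩ := Subgroup.mem_zpowers_iff.mp huZ
        obtain ⟨n, hn⟩ := Subgroup.mem_zpowers_iff.mp hvZ
        rw [← hm, ← hn, ← zpow_add, ← zpow_add, add_comm]
      have : (u : FreeGroup α) * v = (v : FreeGroup α) * u := by
        rcases htot with h | h
        · exact key Z2 hZ2 (h hu) hv
        · exact key Z1 hZ1 hu (h hv)
      exact Subtype.ext (by simpa using this)
    obtain ⟨xU, hxU⟩ := freeGroupAux_subgroup_cyclic U hUcomm
    refine ⟨U, ⟨?_, xU, hxU⟩, fun Z hZ => le_sSup hZ⟩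
    exact (le_sSup hyc : y ≤ U) (hcs hyc).1
  obtain ⟨M, hgle, hMmax⟩ := zorn_le_nonempty₀ s hchains (Subgroup.zpowers g)
    ⟨Subgroup.mem_zpowers g, g, rfl⟩
  obtain ⟨hgM, x, hMx⟩ := hMmax.prop
  -- M is infinite
  have hxne : x ≠ 1 := by
    rintro rfl
    rw [hMx] at hgM
    obtain ⟨n, hn⟩ := Subgroup.mem_zpowers_iff.mp hgM
    exact hg (by rw [← hn, one_zpow])
  have hMinf : (M : Set (FreeGroup α)).Infinite := by
    rw [hMx]; exact freeGroupAux_zpowers_infinite hxne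
  -- M is maximal among cyclic subgroups containing it
  have hMmaximal : ∀ W : Subgroup (FreeGroup α),
      (∃ y : FreeGroup α, W = Subgroup.zpowers y) → M ≤ W → M = W := by
    intro W hWcyc hMW
    have hWs : W ∈ s := ⟨hMW hgM, hWcyc⟩
    exact le_antisymm hMW (hMmax.le_of_ge hWs hMW)
  refine ⟨M, ⟨hgM, ⟨x, hMx⟩, hMinf, hMmaximal⟩, ?_⟩
  -- uniqueness
  rintro Z' ⟨hgZ', ⟨y, hZ'y⟩, -, hZ'max⟩
  -- both M and Z' are contained in the centralizer of g, which is cyclic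
  obtain ⟨t, ht⟩ := freeGroupAux_centralizer_cyclic hg
  have hxcen : x ∈ Subgroup.centralizer ({g} : Set (FreeGroup α)) := by
    rw [hMx] at hgM
    obtain ⟨m, hm⟩ := Subgroup.mem_zpowers_iff.mp hgM
    refine Subgroup.mem_centralizer_singleton_iff.mpr ?_
    rw [← hm]
    exact ((Commute.refl x).zpow_right m)
  have hycen : y ∈ Subgroup.centralizer ({g} : Set (FreeGroup α)) := by
    rw [hZ'y] at hgZ'
    obtain ⟨m, hm⟩ := Subgroup.mem_zpowers_iff.mp hgZ'
    refine Subgroup.mem_centralizer_singleton_iff.mpr ?_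
    rw [← hm]
    exact ((Commute.refl y).zpow_right m)
  have hMle : M ≤ Subgroup.centralizer ({g} : Set (FreeGroup α)) := by
    rw [hMx]; exact Subgroup.zpowers_le.mpr hxcen
  have hZ'le : Z' ≤ Subgroup.centralizer ({g} : Set (FreeGroup α)) := by
    rw [hZ'y]; exact Subgroup.zpowers_le.mpr hycen
  have h1 : M = Subgroup.centralizer ({g} : Set (FreeGroup α)) :=
    hMmaximal _ ⟨t, ht⟩ hMle
  have h2 : Z' = Subgroup.centralizer ({g} : Set (FreeGroup α)) :=
    hZ'max _ ⟨t, ht⟩ hZ'le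
  rw [h1, h2]
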